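/- For positive integers k and ℓ, with s_0 = k and s_n = (s_0 s_1 ⋯ s_{n−1})^ℓ + 1 for n ≥ 1, define the partial quotients a_1 = s_0^ℓ and a_{n+1} = (s_n^ℓ − 1) · Π_{i=0}^{n−1} (s_i^ℓ)^{(−1)^{n+i}} for n ≥ 1. Then the double-exponential lower bound a_n > (k^ℓ + 1)^{(ℓ+1)^{n−4}} holds for all n ≥ 4. -/

import Mathlib

/-- Double-exponential lower bound for the partial quotients of the simple continued
fraction of `C_{k,ℓ}`: `a_n > (k^ℓ + 1)^((ℓ+1)^(n-4))` for all `n ≥ 4`. -/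
theorem stmt_16 (k l : ℕ) (hk : 0 < k) (hl : 0 < l)
    (s : ℕ → ℕ) (hs0 : s 0 = k)
    (hs : ∀ n : ℕ, s (n + 1) = (∏ i ∈ Finset.range (n + 1), s i) ^ l + 1)
    (a : ℕ → ℝ)
    (ha1 : a 1 = (s 0 : ℝ) ^ l)
    (ha : ∀ n : ℕ, 1 ≤ n →
      a (n + 1) = ((s n : ℝ) ^ l - 1)
        * ∏ i ∈ Finset.range n, ((s i : ℝ) ^ l) ^ ((-1 : ℤ) ^ (n + i))) :
    ∀ n : ℕ, 4 ≤ n → ((k : ℝ) ^ l + 1) ^ ((l + 1) ^ (n - 4)) < a n := by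
  -- positivity of s
  have hpos : ∀ n, 1 ≤ s n := by
    intro n
    cases n with
    | zero => rw [hs0]; exact hk
    | succ m => rw [hs m]; exact Nat.le_add_left 1 _
  have h1 : s 1 = k ^ l + 1 := by
    have h := hs 0
    simpa [hs0] using h
  have hs1 : 2 ≤ s 1 := by
    have : 1 ≤ k ^ l := Nat.one_le_pow _ _ hk
    omega
  -- recurrence s (m+1) = (s m - 1) * s m ^ l + 1 for m ≥ 1
  have hrec : ∀ m : ℕ, 1 ≤ m → s (m + 1) = (s m - 1) * s m ^ l + 1 := by
    intro m hm
    obtain ⟨p, rfl⟩ : ∃ p, m = p + 1 := ⟨m - 1, by omega⟩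
    have hP : (∏ i ∈ Finset.range (p + 1), s i) ^ l = s (p + 1) - 1 := by
      rw [hs p, Nat.add_sub_cancel]
    rw [hs (p + 1), Finset.prod_range_succ, mul_pow, hP]
  -- double exponential lower bound for s m
  have D : ∀ m : ℕ, 2 ≤ m → s 1 ^ ((l + 1) ^ (m - 2)) + 1 ≤ s m := by
    intro m hm
    induction m, hm using Nat.le_induction with
    | base =>
        have h2 : s 2 = (s 1 - 1) * s 1 ^ l + 1 := hrec 1 le_rfl
        have hsl : s 1 ≤ s 1 ^ l := Nat.le_self_pow hl.ne' _
        have h11 : 1 ≤ s 1 - 1 := by omega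
        have : s 1 ≤ (s 1 - 1) * s 1 ^ l :=
          le_trans hsl (Nat.le_mul_of_pos_left _ h11)
        simpa [h2] using this
    | succ m hm ih =>
        set Q := s 1 ^ ((l + 1) ^ (m - 2)) with hQ
        have hQ1 : 1 ≤ Q := Nat.one_le_pow _ _ (by omega)
        have hsm : Q + 1 ≤ s m := ih
        have h2 : s (m + 1) = (s m - 1) * s m ^ l + 1 := hrec m (by omega)
        have hexp : (l + 1) ^ (m + 1 - 2) = (l + 1) ^ (m - 2) * (l + 1) := by
          rw [← pow_succ]
          congr 1
          omega
        have hQl : Q ^ l ≤ s m ^ l := Nat.pow_le_pow_left (by omega) l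
        have hmain : Q ^ (l + 1) ≤ (s m - 1) * s m ^ l := by
          calc Q ^ (l + 1) = Q * Q ^ l := by ring
            _ ≤ (s m - 1) * s m ^ l := Nat.mul_le_mul (by omega) hQl
        rw [h2, hexp, ← pow_mul] at *
        omega
  -- real product formula for s n, n ≥ 1
  have hprod : ∀ n : ℕ, 1 ≤ n →
      (s n : ℝ) - 1 = ∏ i ∈ Finset.range n, (s i : ℝ) ^ l := by
    intro n hn
    obtain ⟨p, rfl⟩ : ∃ p, n = p + 1 := ⟨n - 1, by omega⟩
    rw [hs p]
    push_cast
    rw [Finset.prod_pow]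
    ring
  -- key analytic bound : a (n+1) ≥ s (n-2) ^ (2l) for n ≥ 2
  have key : ∀ n : ℕ, 2 ≤ n → (s (n - 2) : ℝ) ^ (2 * l) ≤ a (n + 1) := by
    intro n hn
    have hx1 : ∀ i : ℕ, (1 : ℝ) ≤ (s i : ℝ) ^ l := by
      intro i
      have : (1 : ℝ) ≤ (s i : ℝ) := by exact_mod_cast hpos i
      exact one_le_pow₀ this
    have hx0 : ∀ i : ℕ, (0 : ℝ) < (s i : ℝ) ^ l := fun i => lt_of_lt_of_le one_pos (hx1 i)
    rw [ha n (by omega)]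
    set T := ∏ i ∈ Finset.range n, ((s i : ℝ) ^ l) ^ ((-1 : ℤ) ^ (n + i)) with hT
    set C := ∏ i ∈ Finset.range n, (s i : ℝ) ^ l with hC
    have hTpos : 0 < T := Finset.prod_pos fun i _ => zpow_pos (hx0 i) _
    have hCpos : 0 < C := Finset.prod_pos fun i _ => hx0 i
    -- each combined factor is ≥ 1, and the (n-2) factor is the square
    have hF1 : ∀ i ∈ Finset.range n,
        (1 : ℝ) ≤ ((s i : ℝ) ^ l) ^ ((-1 : ℤ) ^ (n + i)) * (s i : ℝ) ^ l := by
      intro i _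
      rcases Nat.even_or_odd (n + i) with h | h
      · rw [h.neg_one_pow, zpow_one]
        exact one_le_mul_of_one_le_of_one_le (hx1 i) (hx1 i)
      · rw [h.neg_one_pow, zpow_neg_one, inv_mul_cancel₀ (hx0 i).ne']
    have hmem : n - 2 ∈ Finset.range n := Finset.mem_range.mpr (by omega)
    have heven : Even (n + (n - 2)) := ⟨n - 1, by omega⟩
    have hsingle : ((s (n - 2) : ℝ) ^ l) ^ 2 ≤ T * C := by
      have hle : (∏ i ∈ Finset.range n,
            if i = n - 2 then ((s (n - 2) : ℝ) ^ l) ^ 2 else 1) ≤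
          ∏ i ∈ Finset.range n,
            ((s i : ℝ) ^ l) ^ ((-1 : ℤ) ^ (n + i)) * (s i : ℝ) ^ l := by
        apply Finset.prod_le_prod
        · intro i _
          split <;> positivity
        · intro i hi
          by_cases h : i = n - 2
          · subst h
            rw [if_pos rfl, heven.neg_one_pow, zpow_one, ← sq]
          · rw [if_neg h]
            exact hF1 i hi
      rw [Finset.prod_ite_eq' (Finset.range n) (n - 2)
        (fun _ => ((s (n - 2) : ℝ) ^ l) ^ 2), if_pos hmem] at hle
      calc ((s (n - 2) : ℝ) ^ l) ^ 2
          ≤ ∏ i ∈ Finset.range n,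
              ((s i : ℝ) ^ l) ^ ((-1 : ℤ) ^ (n + i)) * (s i : ℝ) ^ l := hle
        _ = T * C := by rw [hT, hC, Finset.prod_mul_distrib]
    -- (s n)^l - 1 ≥ C
    have hA : C ≤ (s n : ℝ) ^ l - 1 := by
      have h1n : (1 : ℝ) ≤ (s n : ℝ) := by exact_mod_cast hpos n
      have h2 : (s n : ℝ) ≤ (s n : ℝ) ^ l := le_self_pow₀ h1n hl.ne'
      have h3 : (s n : ℝ) - 1 = C := by rw [hC]; exact hprod n (by omega)
      linarith
    calc (s (n - 2) : ℝ) ^ (2 * l) = ((s (n - 2) : ℝ) ^ l) ^ 2 := by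
          rw [← pow_mul, mul_comm]
      _ ≤ T * C := hsingle
      _ = C * T := mul_comm _ _
      _ ≤ ((s n : ℝ) ^ l - 1) * T := by
          exact mul_le_mul_of_nonneg_right hA hTpos.le
  -- final assembly
  intro N hN
  have hkey := key (N - 1) (by omega)
  have e1 : N - 1 + 1 = N := by omega
  have e2 : N - 1 - 2 = N - 3 := by omega
  rw [e1, e2] at hkey
  have hb : ((k : ℝ) ^ l + 1) = ((s 1 : ℕ) : ℝ) := by
    rw [h1]; push_cast; ring
  rw [hb]
  -- the nat inequality
  have hnat : s 1 ^ ((l + 1) ^ (N - 4)) < s (N - 3) ^ (2 * l) := by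
    rcases eq_or_lt_of_le hN with h4 | h5
    · -- N = 4
      have : N - 3 = 1 := by omega
      rw [this]
      have : N - 4 = 0 := by omega
      rw [this, pow_zero, pow_one]
      calc s 1 = s 1 ^ 1 := (pow_one _).symm
        _ < s 1 ^ (2 * l) := Nat.pow_lt_pow_right (by omega) (by omega)
    · -- N ≥ 5
      have hm2 : 2 ≤ N - 3 := by omega
      have hD := D (N - 3) hm2
      set Q := s 1 ^ ((l + 1) ^ (N - 3 - 2)) with hQ
      have hQ1 : 1 ≤ Q := Nat.one_le_pow _ _ (by omega)
      have hexp : (l + 1) ^ (N - 4) = (l + 1) ^ (N - 3 - 2) * (l + 1) := by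
        rw [← pow_succ]
        congr 1
        omega
      calc s 1 ^ ((l + 1) ^ (N - 4))
          = Q ^ (l + 1) := by rw [hexp, pow_mul]
        _ ≤ Q ^ (2 * l) := Nat.pow_le_pow_right hQ1 (by omega)
        _ < (Q + 1) ^ (2 * l) := Nat.pow_lt_pow_left (by omega) (by omega)
        _ ≤ s (N - 3) ^ (2 * l) := Nat.pow_le_pow_left (by omega) _
  calc ((s 1 : ℕ) : ℝ) ^ ((l + 1) ^ (N - 4))
      = ((s 1 ^ ((l + 1) ^ (N - 4)) : ℕ) : ℝ) := by push_cast; ring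
    _ < ((s (N - 3) ^ (2 * l) : ℕ) : ℝ) := by exact_mod_cast hnat
    _ ≤ a N := by push_cast; exact hkey
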